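/- Let γ > 1 and let φ be the solution of the ODE Cauchy problem φ'' + 2φ' + φ − γ·φ² = 0 on (0,∞) with φ(0) = 1/(2γ) and φ'(0) = 0. Then φ'(z) < 0 and φ'(z)/φ(z) ≥ −1 for all z > 0, and there exists a constant B > 0 such that φ(z)/(z·e^{−z}) → B as z → +∞. -/

import Mathlib

open Real Filter

noncomputable section

/-- `φ` solves the Cauchy problem `φ'' + 2φ' + φ - γ φ² = 0` on `(0,∞)`,
with `φ(0) = 1/(2γ)` and `φ'(0) = 0`. -/
def SolvesPhiODE (φ : ℝ → ℝ) (γ : ℝ) : Prop :=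
  (∀ z : ℝ, DifferentiableAt ℝ φ z ∧ DifferentiableAt ℝ (deriv φ) z) ∧
  (∀ z : ℝ, 0 < z →
    deriv (deriv φ) z + 2 * deriv φ z + φ z - γ * φ z ^ 2 = 0) ∧
  φ 0 = 1 / (2 * γ) ∧ deriv φ 0 = 0

set_option maxHeartbeats 2000000 in
/-- Lemma 4.4: properties of the solution `φ` of `φ'' + 2φ' + φ - γφ² = 0`. -/
theorem phi_properties (γ : ℝ) (hγ : 1 < γ)
    (φ : ℝ → ℝ) (hφ : SolvesPhiODE φ γ) :
    (∀ z : ℝ, 0 < z → deriv φ z < 0 ∧ -1 ≤ deriv φ z / φ z) ∧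
    ∃ B : ℝ, 0 < B ∧
      Filter.Tendsto (fun z => φ z / (z * Real.exp (-z))) Filter.atTop (nhds B) := by
  obtain ⟨hdiff, hode, hφ0, hdφ0⟩ := hφ
  have hγ0 : (0:ℝ) < γ := lt_trans one_pos hγ
  have hφ1 : Differentiable ℝ φ := fun z => (hdiff z).1
  have hφ2 : Differentiable ℝ (deriv φ) := fun z => (hdiff z).2
  have hDφ : ∀ z : ℝ, HasDerivAt φ (deriv φ z) z := fun z => (hφ1 z).hasDerivAt
  have hODE : ∀ z : ℝ, 0 < z → deriv (deriv φ) z = γ * φ z ^ 2 - φ z - 2 * deriv φ z := by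
    intro z hz; have := hode z hz; linarith
  have hDφ' : ∀ z : ℝ, 0 < z → HasDerivAt (deriv φ) (γ * φ z ^ 2 - φ z - 2 * deriv φ z) z := by
    intro z hz; rw [← hODE z hz]; exact (hφ2 z).hasDerivAt
  -- ψ and v := ψ'
  set ψ : ℝ → ℝ := fun z => exp z * φ z with hψdef
  set v : ℝ → ℝ := fun z => exp z * (φ z + deriv φ z) with hvdef
  have hψdiff : Differentiable ℝ ψ := Real.differentiable_exp.mul hφ1
  have hvdiff : Differentiable ℝ v := Real.differentiable_exp.mul (hφ1.add hφ2)
  have hDψ : ∀ z : ℝ, HasDerivAt ψ (v z) z := by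
    intro z
    have h := (Real.hasDerivAt_exp z).mul (hDφ z)
    refine h.congr_deriv ?_
    simp only [hvdef]; ring
  have hDv : ∀ z : ℝ, 0 < z → HasDerivAt v (γ * exp z * φ z ^ 2) z := by
    intro z hz
    have h := (Real.hasDerivAt_exp z).mul ((hDφ z).add (hDφ' z hz))
    refine h.congr_deriv ?_
    rw [Pi.add_apply]; ring
  have hv0 : v 0 = 1 / (2*γ) := by simp [hvdef, hφ0, hdφ0]
  have hψ0 : ψ 0 = 1 / (2*γ) := by simp [hψdef, hφ0]
  -- v monotone on Ici 0, hence ≥ 1/(2γ)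
  have hvmono : MonotoneOn v (Set.Ici 0) := by
    apply monotoneOn_of_deriv_nonneg (convex_Ici 0) hvdiff.continuous.continuousOn
      hvdiff.differentiableOn
    intro x hx
    rw [interior_Ici] at hx
    rw [(hDv x hx).deriv]
    positivity
  have hvlb : ∀ z : ℝ, 0 ≤ z → 1/(2*γ) ≤ v z := by
    intro z hz
    rw [← hv0]; exact hvmono Set.self_mem_Ici hz hz
  -- ψ lower bound
  have hψlb : ∀ z : ℝ, 0 ≤ z → (1 + z)/(2*γ) ≤ ψ z := by
    intro z hz
    have hm : MonotoneOn (fun z => ψ z - z * (1/(2*γ))) (Set.Ici 0) := by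
      apply monotoneOn_of_deriv_nonneg (convex_Ici 0)
        (hψdiff.continuous.continuousOn.sub (by fun_prop))
        ((hψdiff.sub (by fun_prop)).differentiableOn)
      intro x hx
      rw [interior_Ici] at hx
      have : HasDerivAt (fun z => ψ z - z * (1/(2*γ))) (v x - 1 * (1/(2*γ))) x :=
        (hDψ x).sub ((hasDerivAt_id x).mul_const _)
      change 0 ≤ deriv (fun z => ψ z - z * (1/(2*γ))) x
      rw [this.deriv]
      have := hvlb x (le_of_lt hx)
      linarith
    have := hm Set.self_mem_Ici hz hz
    simp only [hψ0] at this
    have h2γ : (0:ℝ) < 2*γ := by linarith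
    rw [div_le_iff₀ h2γ]
    have h1 : (1/(2*γ)) * (2*γ) = 1 := by field_simp
    nlinarith [this]
  have hφpos : ∀ z : ℝ, 0 ≤ z → 0 < φ z := by
    intro z hz
    have h1 := hψlb z hz
    have h2γ : (0:ℝ) < 2*γ := by linarith
    have : 0 < ψ z := lt_of_lt_of_le (by positivity) h1
    have he := Real.exp_pos z
    simp only [hψdef] at this
    nlinarith
  -- w := e^{2z} φ'
  set w : ℝ → ℝ := fun z => exp (2*z) * deriv φ z with hwdef
  have hE2 : ∀ z : ℝ, HasDerivAt (fun z : ℝ => exp (2*z)) (2 * exp (2*z)) z := by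
    intro z
    have h := ((hasDerivAt_id z).const_mul (2:ℝ)).exp
    simpa [mul_comm] using h
  have hwdiff : Differentiable ℝ w := by
    apply Differentiable.mul _ hφ2
    exact fun z => (hE2 z).differentiableAt
  have hDw : ∀ z : ℝ, 0 < z → HasDerivAt w (exp (2*z) * (γ * φ z ^ 2 - φ z)) z := by
    intro z hz
    have h := (hE2 z).mul (hDφ' z hz)
    refine h.congr_deriv ?_; ring
  have hw0 : w 0 = 0 := by simp [hwdef, hdφ0]
  -- w < 0 on (0, ∞)
  have hwneg : ∀ z : ℝ, 0 < z → w z < 0 := by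
    -- first: w < 0 near 0
    have hcont : Continuous fun z => exp (2*z) * (γ * φ z ^ 2 - φ z) := by
      have := hφ1.continuous; fun_prop
    have hval : exp (2*(0:ℝ)) * (γ * φ 0 ^ 2 - φ 0) < 0 := by
      rw [hφ0, mul_zero, Real.exp_zero, one_mul]
      have h2γ : (0:ℝ) < 2*γ := by linarith
      have ht : γ * (1/(2*γ))^2 = (1/2) * (1/(2*γ)) := by field_simp
      rw [ht]
      have htp : 0 < 1/(2*γ) := by positivity
      linarith
    obtain ⟨δ, hδpos, hδ⟩ : ∃ δ > 0, ∀ y : ℝ, |y - 0| < δ →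
        exp (2*y) * (γ * φ y ^ 2 - φ y) < 0 := by
      have h := hcont.tendsto 0
      have h2 := (tendsto_order.1 h).2 0 hval
      rw [Metric.eventually_nhds_iff] at h2
      obtain ⟨δ, hδpos, hδ⟩ := h2
      exact ⟨δ, hδpos, fun y hy => hδ (by simpa [Real.dist_eq] using hy)⟩
    -- w strictly anti on [0, δ/2]
    have hwanti0 : StrictAntiOn w (Set.Icc 0 (δ/2)) := by
      apply strictAntiOn_of_deriv_neg (convex_Icc 0 (δ/2)) hwdiff.continuous.continuousOn
      intro x hx
      rw [interior_Icc] at hx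
      rw [(hDw x hx.1).deriv]
      apply hδ
      rw [sub_zero, abs_of_pos hx.1]
      linarith [hx.2]
    have hwnegδ : ∀ z : ℝ, 0 < z → z ≤ δ/2 → w z < 0 := by
      intro z hz1 hz2
      have := hwanti0 (Set.mem_Icc.2 ⟨le_refl 0, by linarith⟩)
        (Set.mem_Icc.2 ⟨le_of_lt hz1, hz2⟩) hz1
      rwa [hw0] at this
    by_contra hcon
    push_neg at hcon
    obtain ⟨z, hzpos, hzw⟩ := hcon
    set T : Set ℝ := {z | 0 < z ∧ 0 ≤ w z} with hTdef
    have hTne : T.Nonempty := ⟨z, hzpos, hzw⟩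
    have hTbdd : BddBelow T := ⟨0, fun t ht => le_of_lt ht.1⟩
    set z₁ : ℝ := sInf T with hz₁def
    have hz₁lb : δ/2 ≤ z₁ := by
      apply le_csInf hTne
      intro t ht
      by_contra hlt
      push_neg at hlt
      exact absurd ht.2 (not_le.2 (hwnegδ t ht.1 (le_of_lt hlt)))
    have hz₁pos : 0 < z₁ := lt_of_lt_of_le (by linarith) hz₁lb
    have hwz₁ : 0 ≤ w z₁ := by
      have hclosed : IsClosed {z : ℝ | 0 ≤ w z} :=
        isClosed_le continuous_const hwdiff.continuous
      have hsub : T ⊆ {z : ℝ | 0 ≤ w z} := fun t ht => ht.2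
      have : z₁ ∈ closure T := csInf_mem_closure hTne hTbdd
      exact (hclosed.closure_subset_iff.2 hsub) this
    have hwlt : ∀ t : ℝ, 0 < t → t < z₁ → w t < 0 := by
      intro t ht1 ht2
      by_contra hge
      push_neg at hge
      exact absurd (csInf_le hTbdd ⟨ht1, hge⟩) (not_le.2 ht2)
    -- φ antitone on [0, z₁], so φ ≤ 1/(2γ) there
    have hφanti : AntitoneOn φ (Set.Icc 0 z₁) := by
      apply antitoneOn_of_deriv_nonpos (convex_Icc 0 z₁) hφ1.continuous.continuousOn
        hφ1.differentiableOn
      intro x hx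
      rw [interior_Icc] at hx
      have hwx := hwlt x hx.1 hx.2
      rw [hwdef] at hwx
      simp only at hwx
      nlinarith [Real.exp_pos (2*x)]
    -- then deriv w < 0 on (0, z₁), so w z₁ < w 0 = 0
    have hwanti : StrictAntiOn w (Set.Icc 0 z₁) := by
      apply strictAntiOn_of_deriv_neg (convex_Icc 0 z₁) hwdiff.continuous.continuousOn
      intro x hx
      rw [interior_Icc] at hx
      rw [(hDw x hx.1).deriv]
      have hφx : φ x ≤ 1/(2*γ) := by
        have := hφanti (Set.mem_Icc.2 ⟨le_refl 0, le_of_lt hz₁pos⟩)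
          (Set.mem_Icc.2 ⟨le_of_lt hx.1, le_of_lt hx.2⟩) hx.1.le
        rwa [hφ0] at this
      have hφxp : 0 < φ x := hφpos x hx.1.le
      have h2γ : (0:ℝ) < 2*γ := by linarith
      have hgφ : γ * φ x ≤ 1/2 := by
        rw [le_div_iff₀ h2γ] at hφx; nlinarith
      have : γ * φ x ^ 2 - φ x < 0 := by nlinarith
      nlinarith [Real.exp_pos (2*x)]
    have := hwanti (Set.mem_Icc.2 ⟨le_refl 0, hz₁pos.le⟩)
      (Set.mem_Icc.2 ⟨hz₁pos.le, le_refl z₁⟩) hz₁pos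
    rw [hw0] at this
    linarith
  have hφ'neg : ∀ z : ℝ, 0 < z → deriv φ z < 0 := by
    intro z hz
    have := hwneg z hz
    rw [hwdef] at this
    simp only at this
    nlinarith [Real.exp_pos (2*z)]
  -- φ antitone and ≤ 1/(2γ) on [0,∞)
  have hφanti : AntitoneOn φ (Set.Ici 0) := by
    apply antitoneOn_of_deriv_nonpos (convex_Ici 0) hφ1.continuous.continuousOn hφ1.differentiableOn
    intro x hx
    rw [interior_Ici] at hx
    exact (hφ'neg x hx).le
  have hφub : ∀ z : ℝ, 0 ≤ z → φ z ≤ 1/(2*γ) := by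
    intro z hz
    have := hφanti Set.self_mem_Ici hz hz
    rwa [hφ0] at this
  -- Part 1
  have part1 : ∀ z : ℝ, 0 < z → deriv φ z < 0 ∧ -1 ≤ deriv φ z / φ z := by
    intro z hz
    refine ⟨hφ'neg z hz, ?_⟩
    have hp : 0 < φ z := hφpos z hz.le
    rw [le_div_iff₀ hp]
    have hv := hvlb z hz.le
    rw [hvdef] at hv
    simp only at hv
    have h2γ : (0:ℝ) < 2*γ := by linarith
    have : 0 ≤ φ z + deriv φ z := by
      nlinarith [Real.exp_pos z, div_pos one_pos h2γ]
    rw [neg_mul, one_mul]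
    linarith
  -- generic exponential derivative helper
  have hEc : ∀ (c z : ℝ), HasDerivAt (fun z : ℝ => exp (c*z)) (c * exp (c*z)) z := by
    intro c z
    simpa [mul_comm] using ((hasDerivAt_id z).const_mul c).exp
  -- infimum of φ is 0
  have hinf : ∀ ε : ℝ, 0 < ε → ∃ z₂ : ℝ, 1 ≤ z₂ ∧ φ z₂ < ε := by
    intro ε hε
    by_contra hcon
    push_neg at hcon
    have hεφ : ∀ z : ℝ, 1 ≤ z → ε ≤ φ z := fun z hz => hcon z hz
    -- w z + (ε/4) e^{2z} antitone on [1, ∞)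
    have hA : AntitoneOn (fun z => w z + (ε/4) * exp (2*z)) (Set.Ici 1) := by
      apply antitoneOn_of_deriv_nonpos (convex_Ici 1)
        ((hwdiff.add (by fun_prop)).continuous.continuousOn)
        ((hwdiff.add (by fun_prop)).differentiableOn)
      intro x hx
      rw [interior_Ici] at hx
      have hx0 : (0:ℝ) < x := by linarith [Set.mem_Ioi.1 hx]
      have hD : HasDerivAt (fun z => w z + (ε/4) * exp (2*z))
          (exp (2*x) * (γ * φ x ^ 2 - φ x) + (ε/4) * (2 * exp (2*x))) x :=
        (hDw x hx0).add ((hE2 x).const_mul (ε/4))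
      change deriv (fun z => w z + (ε/4) * exp (2*z)) x ≤ 0
      rw [hD.deriv]
      have h1 : ε ≤ φ x := hεφ x (le_of_lt (Set.mem_Ioi.1 hx))
      have h2 : φ x ≤ 1/(2*γ) := hφub x hx0.le
      have h2γ : (0:ℝ) < 2*γ := by linarith only [hγ0]
      have hp : 0 < φ x := hφpos x hx0.le
      have hgφ : γ * φ x ≤ 1/2 := by
        rw [le_div_iff₀ h2γ] at h2; linarith only [h2]
      have hq : γ * φ x ^ 2 - φ x ≤ -(φ x)/2 := by nlinarith only [hgφ, hp]
      have he := Real.exp_pos (2*x)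
      nlinarith only [hq, h1, he]
    have hwub : ∀ z : ℝ, 1 ≤ z → w z ≤ (ε/4) * exp 2 - (ε/4) * exp (2*z) := by
      intro z hz
      have := hA Set.self_mem_Ici hz hz
      simp only at this
      have hw1 : w 1 < 0 := hwneg 1 one_pos
      have : w z + ε/4 * exp (2*z) ≤ w 1 + ε/4 * exp (2*1) := this
      norm_num at this ⊢
      linarith only [this, hw1]
    have hφ'ub : ∀ z : ℝ, 2 ≤ z → deriv φ z ≤ -ε/8 := by
      intro z hz
      have h1 := hwub z (by linarith only [hz])
      have hexp : 2 * exp 2 ≤ exp (2*z) := by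
        have h2 : (2:ℝ) ≤ exp 1 := by linarith only [Real.add_one_le_exp 1]
        have h3 : exp 1 * exp 2 ≤ exp (2*z) := by
          rw [← Real.exp_add]
          apply Real.exp_le_exp.2
          linarith only [hz]
        nlinarith only [h2, h3, Real.exp_pos 2]
      have hw : w z = exp (2*z) * deriv φ z := by rw [hwdef]
      rw [hw] at h1
      have he := Real.exp_pos (2*z)
      nlinarith only [h1, hexp, he, hε]
    -- φ + (ε/8) z antitone on [2, ∞)
    have hB : AntitoneOn (fun z => φ z + (ε/8) * z) (Set.Ici 2) := by
      apply antitoneOn_of_deriv_nonpos (convex_Ici 2)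
        ((hφ1.add (by fun_prop)).continuous.continuousOn)
        ((hφ1.add (by fun_prop)).differentiableOn)
      intro x hx
      rw [interior_Ici] at hx
      have hD : HasDerivAt (fun z => φ z + (ε/8) * z) (deriv φ x + ε/8 * 1) x :=
        (hDφ x).add ((hasDerivAt_id x).const_mul (ε/8))
      change deriv (fun z => φ z + (ε/8) * z) x ≤ 0
      rw [hD.deriv]
      have := hφ'ub x (le_of_lt (Set.mem_Ioi.1 hx))
      linarith only [this, hε]
    set z₃ : ℝ := 2 + (16 * φ 2 + ε)/ε with hz₃def
    have hφ2pos : 0 < φ 2 := hφpos 2 (by norm_num)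
    have hz₃ : 2 ≤ z₃ := by
      rw [hz₃def]
      have : 0 < (16 * φ 2 + ε)/ε := by positivity
      linarith
    have := hB Set.self_mem_Ici hz₃ hz₃
    simp only at this
    have hkey : (ε/8) * z₃ = ε/4 + 2 * φ 2 + ε/8 := by
      rw [hz₃def]
      field_simp
      ring
    have hφz₃ : 0 < φ z₃ := hφpos z₃ (by linarith only [hz₃])
    rw [hkey] at this
    linarith only [this, hφz₃, hφ2pos, hε]
  -- choose z₂ with φ z₂ < 1/(16 γ)
  obtain ⟨z₂, hz₂1, hz₂φ⟩ := hinf (1/(16*γ)) (by positivity)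
  have hz₂0 : (0:ℝ) ≤ z₂ := by linarith only [hz₂1]
  have hφsmall : ∀ z : ℝ, z₂ ≤ z → γ * φ z < 1/16 := by
    intro z hz
    have h1 : φ z ≤ φ z₂ := hφanti (Set.mem_Ici.2 hz₂0)
      (Set.mem_Ici.2 (by linarith only [hz, hz₂1])) hz
    have h2γ : (0:ℝ) < 16*γ := by linarith only [hγ0]
    have h3 : γ * φ z₂ < 1/16 := by
      rw [lt_div_iff₀ h2γ] at hz₂φ
      linarith only [hz₂φ]
    nlinarith only [h1, h3, hγ0]
  -- q := φ' + (3/4) φ decays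
  set q : ℝ → ℝ := fun z => deriv φ z + (3/4) * φ z with hqdef
  have hqdiff : Differentiable ℝ q := hφ2.add (hφ1.const_mul _)
  have hDq : ∀ z : ℝ, 0 < z →
      HasDerivAt q (γ * φ z ^ 2 - φ z - (5/4) * deriv φ z) z := by
    intro z hz
    have h := (hDφ' z hz).add ((hDφ z).const_mul (3/4))
    refine h.congr_deriv ?_
    ring
  set K : ℝ := exp ((5/4)*z₂) * q z₂ with hKdef
  have hqbound : ∀ z : ℝ, z₂ ≤ z → exp ((5/4)*z) * q z ≤ K := by
    intro z hz
    have hdm : Differentiable ℝ (fun z => exp ((5/4)*z) * q z) :=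
      fun y => ((hEc (5/4) y).mul ((hqdiff y).hasDerivAt)).differentiableAt
    have hA : AntitoneOn (fun z => exp ((5/4)*z) * q z) (Set.Ici z₂) := by
      apply antitoneOn_of_deriv_nonpos (convex_Ici z₂) hdm.continuous.continuousOn
        hdm.differentiableOn
      intro x hx
      rw [interior_Ici] at hx
      have hx0 : 0 < x := by linarith only [Set.mem_Ioi.1 hx, hz₂1]
      have hD : HasDerivAt (fun z => exp ((5/4)*z) * q z)
          ((5/4) * exp ((5/4)*x) * q x + exp ((5/4)*x) * (γ * φ x ^ 2 - φ x - (5/4) * deriv φ x)) x :=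
        (hEc (5/4) x).mul (hDq x hx0)
      rw [hD.deriv]
      have hsm := hφsmall x (le_of_lt (Set.mem_Ioi.1 hx))
      have hφp : 0 < φ x := hφpos x hx0.le
      have hkey : (5/4) * q x + (γ * φ x ^ 2 - φ x - (5/4) * deriv φ x)
          = γ * φ x ^ 2 - (1/16) * φ x := by rw [hqdef]; ring
      have h1 : γ * φ x ^ 2 - (1/16) * φ x ≤ 0 := by nlinarith only [hsm, hφp]
      have he := Real.exp_pos ((5/4)*x)
      nlinarith only [hkey, h1, he]
    have := hA Set.self_mem_Ici hz hz
    simpa [hKdef] using this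
  -- e^{(3/4)z} φ z is bounded on [z₂, ∞)
  set M : ℝ := exp ((3/4)*z₂) * φ z₂ + 2*K*exp (-(1/2)*z₂) + 2*|K| with hMdef
  have hφdecay : ∀ z : ℝ, z₂ ≤ z → exp ((3/4)*z) * φ z ≤ M := by
    intro z hz
    have hdm : Differentiable ℝ (fun z => exp ((3/4)*z) * φ z + 2*K*exp (-(1/2)*z)) :=
      fun y => (((hEc (3/4) y).mul (hDφ y)).add
        ((hEc (-(1/2)) y).const_mul (2*K))).differentiableAt
    have hA : AntitoneOn (fun z => exp ((3/4)*z) * φ z + 2*K*exp (-(1/2)*z)) (Set.Ici z₂) := by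
      apply antitoneOn_of_deriv_nonpos (convex_Ici z₂) hdm.continuous.continuousOn
        hdm.differentiableOn
      intro x hx
      rw [interior_Ici] at hx
      have hx0 : 0 < x := by linarith only [Set.mem_Ioi.1 hx, hz₂1]
      have hD : HasDerivAt (fun z => exp ((3/4)*z) * φ z + 2*K*exp (-(1/2)*z))
          (((3/4) * exp ((3/4)*x) * φ x + exp ((3/4)*x) * deriv φ x)
            + 2*K*(-(1/2) * exp (-(1/2)*x))) x :=
        ((hEc (3/4) x).mul (hDφ x)).add ((hEc (-(1/2)) x).const_mul (2*K))
      rw [hD.deriv]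
      have hq1 : exp ((5/4)*x) * q x ≤ K := hqbound x (le_of_lt (Set.mem_Ioi.1 hx))
      -- multiply by exp(-(1/2)x) > 0
      have he1 : (0:ℝ) < exp (-(1/2)*x) := Real.exp_pos _
      have hmul : exp (-(1/2)*x) * (exp ((5/4)*x) * q x) ≤ exp (-(1/2)*x) * K :=
        mul_le_mul_of_nonneg_left hq1 he1.le
      have hexp_eq : exp (-(1/2)*x) * exp ((5/4)*x) = exp ((3/4)*x) := by
        rw [← Real.exp_add]; congr 1; ring
      have hkey : exp ((3/4)*x) * q x ≤ exp (-(1/2)*x) * K := by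
        calc exp ((3/4)*x) * q x = exp (-(1/2)*x) * (exp ((5/4)*x) * q x) := by
              rw [← mul_assoc, hexp_eq]
          _ ≤ exp (-(1/2)*x) * K := hmul
      have hqx : exp ((3/4)*x) * q x
          = (3/4) * exp ((3/4)*x) * φ x + exp ((3/4)*x) * deriv φ x := by
        rw [hqdef]; ring
      rw [hqx] at hkey
      linarith only [hkey]
    have h1 := hA Set.self_mem_Ici hz hz
    simp only at h1
    have h2 : (0:ℝ) < exp (-(1/2)*z) := Real.exp_pos _
    have h3 : exp (-(1/2)*z) ≤ 1 := by
      rw [Real.exp_le_one_iff]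
      nlinarith only [hz, hz₂1]
    have h4 : -(2*K*exp (-(1/2)*z)) ≤ 2*|K| := by
      rcases le_or_gt 0 K with hK | hK
      · rw [abs_of_nonneg hK]; nlinarith only [h2, h3, hK]
      · rw [abs_of_neg hK]; nlinarith only [h2, h3, hK]
    rw [hMdef]
    linarith only [h1, h4]
  have hMpos : 0 < M := by
    have := hφdecay z₂ le_rfl
    have h1 : 0 < exp ((3/4)*z₂) * φ z₂ :=
      mul_pos (Real.exp_pos _) (hφpos z₂ (by linarith only [hz₂1]))
    exact lt_of_lt_of_le h1 this
  -- v is bounded above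
  set Vmax : ℝ := v z₂ + 2*γ*M^2 with hVdef
  have hvub : ∀ z : ℝ, 0 ≤ z → v z ≤ Vmax := by
    have hvub2 : ∀ z : ℝ, z₂ ≤ z → v z ≤ Vmax := by
      intro z hz
      have hdm : Differentiable ℝ (fun z => v z + 2*γ*M^2*exp (-(1/2)*z)) :=
        fun y => ((hvdiff y).hasDerivAt.add
          ((hEc (-(1/2)) y).const_mul (2*γ*M^2))).differentiableAt
      have hA : AntitoneOn (fun z => v z + 2*γ*M^2*exp (-(1/2)*z)) (Set.Ici z₂) := by
        apply antitoneOn_of_deriv_nonpos (convex_Ici z₂) hdm.continuous.continuousOn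
          hdm.differentiableOn
        intro x hx
        rw [interior_Ici] at hx
        have hx0 : 0 < x := by linarith only [Set.mem_Ioi.1 hx, hz₂1]
        have hD : HasDerivAt (fun z => v z + 2*γ*M^2*exp (-(1/2)*z))
            (γ * exp x * φ x ^ 2 + 2*γ*M^2*(-(1/2) * exp (-(1/2)*x))) x :=
          (hDv x hx0).add ((hEc (-(1/2)) x).const_mul (2*γ*M^2))
        rw [hD.deriv]
        have hb := hφdecay x (le_of_lt (Set.mem_Ioi.1 hx))
        have hφp : 0 ≤ φ x := (hφpos x hx0.le).le
        have he34 := Real.exp_pos ((3/4)*x)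
        have hsq0 : (exp ((3/4)*x) * φ x) * (exp ((3/4)*x) * φ x) ≤ M * M :=
          mul_self_le_mul_self (mul_nonneg he34.le hφp) hb
        have hsq : exp ((3/4)*x) ^ 2 * φ x ^ 2 ≤ M^2 := by
          have heq2 : exp ((3/4)*x) ^ 2 * φ x ^ 2
              = (exp ((3/4)*x) * φ x) * (exp ((3/4)*x) * φ x) := by ring
          have heq3 : M^2 = M * M := sq M
          rw [heq2, heq3]; exact hsq0
        have he32 : exp ((3/4)*x) ^ 2 = exp ((3/2)*x) := by
          rw [sq, ← Real.exp_add]; congr 1; ring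
        rw [he32] at hsq
        have hem := Real.exp_pos (-(1/2)*x)
        have hmul : exp (-(1/2)*x) * (exp ((3/2)*x) * φ x ^2) ≤ exp (-(1/2)*x) * M^2 :=
          mul_le_mul_of_nonneg_left hsq hem.le
        have hee : exp (-(1/2)*x) * exp ((3/2)*x) = exp x := by
          rw [← Real.exp_add]; congr 1; ring
        rw [← mul_assoc, hee] at hmul
        nlinarith only [hmul, hγ0]
      have h1 : v z + 2*γ*M^2*exp (-(1/2)*z) ≤ v z₂ + 2*γ*M^2*exp (-(1/2)*z₂) :=
        hA Set.self_mem_Ici hz hz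
      have h2 : exp (-(1/2)*z₂) ≤ 1 := by
        rw [Real.exp_le_one_iff]; linarith only [hz₂0]
      have h3 := Real.exp_pos (-(1/2)*z)
      have hgm : 0 ≤ 2*γ*M^2 := by positivity
      have hA1 : 2*γ*M^2 * exp (-(1/2)*z₂) ≤ 2*γ*M^2 := mul_le_of_le_one_right hgm h2
      have hA2 : 0 ≤ 2*γ*M^2 * exp (-(1/2)*z) := mul_nonneg hgm h3.le
      have goalcheck : v z ≤ v z₂ + 2*γ*M^2 :=
        calc v z ≤ v z + 2*γ*M^2*exp (-(1/2)*z) := le_add_of_nonneg_right hA2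
          _ ≤ v z₂ + 2*γ*M^2*exp (-(1/2)*z₂) := h1
          _ ≤ v z₂ + 2*γ*M^2 := add_le_add_right hA1 _
      rw [hVdef]
      exact goalcheck
    intro z hz
    rcases le_or_gt z₂ z with h | h
    · exact hvub2 z h
    · have h1 : v z ≤ v z₂ := hvmono (Set.mem_Ici.2 hz) (Set.mem_Ici.2 hz₂0) h.le
      have := hvub2 z₂ le_rfl
      linarith only [h1, this]
  have hbdd : BddAbove (v '' Set.Ici 0) := by
    refine ⟨Vmax, ?_⟩
    rintro y ⟨x, hx, rfl⟩
    exact hvub x hx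
  have hne : (v '' Set.Ici 0).Nonempty := ⟨v 0, 0, Set.self_mem_Ici, rfl⟩
  set B : ℝ := sSup (v '' Set.Ici 0) with hBdef
  have hvleB : ∀ z : ℝ, 0 ≤ z → v z ≤ B := fun z hz => le_csSup hbdd ⟨z, hz, rfl⟩
  have hBpos : 0 < B := by
    have hB0 : 0 < v 0 := by rw [hv0]; positivity
    exact lt_of_lt_of_le hB0 (hvleB 0 le_rfl)
  have hkeyB : ∀ b : ℝ, b < B → ∃ z₀ : ℝ, 0 ≤ z₀ ∧ b < v z₀ := by
    intro b hb
    rw [hBdef] at hb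
    obtain ⟨y, ⟨z₀, hz₀, rfl⟩, h⟩ := exists_lt_of_lt_csSup hne hb
    exact ⟨z₀, hz₀, h⟩
  have hψub : ∀ z : ℝ, 0 ≤ z → ψ z ≤ ψ 0 + B * z := by
    intro z hz
    have hdm : Differentiable ℝ (fun z => B * z - ψ z) :=
      (differentiable_id.const_mul B).sub hψdiff
    have hm : MonotoneOn (fun z => B * z - ψ z) (Set.Ici 0) := by
      apply monotoneOn_of_deriv_nonneg (convex_Ici 0) hdm.continuous.continuousOn
        hdm.differentiableOn
      intro x hx
      rw [interior_Ici] at hx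
      have hD : HasDerivAt (fun z => B * z - ψ z) (B * 1 - v x) x :=
        ((hasDerivAt_id x).const_mul B).sub (hDψ x)
      rw [hD.deriv]
      have := hvleB x (le_of_lt hx)
      linarith only [this]
    have := hm Set.self_mem_Ici hz hz
    simp only at this
    linarith only [this]
  have htends : Tendsto (fun z => ψ z / z) atTop (nhds B) := by
    rw [Metric.tendsto_atTop]
    intro ε hε
    obtain ⟨z₀, hz₀, hylt⟩ := hkeyB (B - ε/2) (by linarith only [hε])
    have hlow : ∀ z : ℝ, z₀ ≤ z → ψ z₀ + (B - ε/2) * (z - z₀) ≤ ψ z := by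
      intro z hz
      have hdm : Differentiable ℝ (fun z => ψ z - (B - ε/2) * z) :=
        hψdiff.sub (differentiable_id.const_mul _)
      have hm : MonotoneOn (fun z => ψ z - (B - ε/2) * z) (Set.Ici z₀) := by
        apply monotoneOn_of_deriv_nonneg (convex_Ici z₀) hdm.continuous.continuousOn
          hdm.differentiableOn
        intro x hx
        rw [interior_Ici] at hx
        have hD : HasDerivAt (fun z => ψ z - (B - ε/2) * z) (v x - (B - ε/2) * 1) x :=
          (hDψ x).sub ((hasDerivAt_id x).const_mul _)
        rw [hD.deriv]
        have h1 : v z₀ ≤ v x := hvmono (Set.mem_Ici.2 hz₀)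
          (Set.mem_Ici.2 (le_trans hz₀ (le_of_lt hx))) (le_of_lt hx)
        linarith only [h1, hylt]
      have := hm Set.self_mem_Ici hz hz
      simp only at this
      linarith only [this]
    set D : ℝ := max (max (ψ 0) ((B - ε/2) * z₀ - ψ z₀)) 1 with hDdef
    have hD1 : (1:ℝ) ≤ D := le_max_right _ _
    have hDψ0 : ψ 0 ≤ D := le_trans (le_max_left _ _) (le_max_left _ _)
    have hDc : (B - ε/2) * z₀ - ψ z₀ ≤ D := le_trans (le_max_right _ _) (le_max_left _ _)
    refine ⟨max (z₀ + 1) (8 * D / ε), ?_⟩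
    intro z hz
    have hz1 : z₀ + 1 ≤ z := le_trans (le_max_left _ _) hz
    have hz2 : 8 * D / ε ≤ z := le_trans (le_max_right _ _) hz
    have hz0' : 0 < z := by linarith only [hz1, hz₀]
    have hzD : 8 * D ≤ z * ε := by rw [div_le_iff₀ hε] at hz2; linarith only [hz2]
    rw [Real.dist_eq, abs_sub_lt_iff]
    have hup := hψub z hz0'.le
    have hlo := hlow z (by linarith only [hz1])
    have hψz : ψ z / z * z = ψ z := div_mul_cancel₀ _ (ne_of_gt hz0')
    constructor
    · nlinarith only [hup, hψz, hzD, hDψ0, hD1, hz0', hε]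
    · nlinarith only [hlo, hψz, hzD, hDc, hD1, hz0', hε]
  have hfinal : Filter.Tendsto (fun z => φ z / (z * Real.exp (-z))) Filter.atTop (nhds B) := by
    have heq : (fun z => ψ z / z) =ᶠ[atTop] (fun z => φ z / (z * exp (-z))) := by
      filter_upwards [eventually_gt_atTop 0] with z hz
      rw [hψdef]
      simp only
      have hz' : z ≠ 0 := ne_of_gt hz
      rw [Real.exp_neg]
      field_simp
    exact Filter.Tendsto.congr' heq htends
  exact ⟨part1, B, hBpos, hfinal⟩
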